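/- For every integer n ≥ 2 and every real skew-symmetric n×n matrix Θ, there exist a natural number n_q with 2·n_q ≤ n and an invertible real n×n matrix P such that P·Θ·Pᵀ equals the block-diagonal matrix diag(diag_{n_q}(J), 0_{(n−2n_q)×(n−2n_q)}), i.e. the matrix whose top-left 2n_q×2n_q block is diag_{n_q}(J) and whose remaining entries are zero. -/

import Mathlib

open Matrix

/-- The 2×2 real matrix `J = [[0,1],[-1,0]]`. -/
def Jmat : Matrix (Fin 2) (Fin 2) ℝ := !![0, 1; -1, 0]

/-- `diagJ k` is the `2k × 2k` block-diagonal real matrix with `k` copies of `J`. -/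
def diagJ (k : ℕ) : Matrix (Fin (2 * k)) (Fin (2 * k)) ℝ :=
  Matrix.of fun i j =>
    if i.val / 2 = j.val / 2 then
      Jmat ⟨i.val % 2, Nat.mod_lt _ two_pos⟩ ⟨j.val % 2, Nat.mod_lt _ two_pos⟩
    else 0

/-- The `n × n` real matrix `diag(diag_{n_q}(J), 0)`: top-left `2 n_q × 2 n_q` block is
`diagJ n_q` and all remaining entries are zero. -/
def embedJ (n n_q : ℕ) : Matrix (Fin n) (Fin n) ℝ :=
  Matrix.of fun i j =>
    if h : i.val < 2 * n_q ∧ j.val < 2 * n_q then diagJ n_q ⟨i.val, h.1⟩ ⟨j.val, h.2⟩ else 0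

/-- For every integer `n ≥ 2` and every real skew-symmetric `n × n` matrix `Θ`, there exist
`n_q` with `2 n_q ≤ n` and an invertible real `n × n` matrix `P` such that
`P ⬝ Θ ⬝ Pᵀ = diag(diag_{n_q}(J), 0)`. -/


lemma congr_apply {ι : Type*} [Fintype ι] (P A : Matrix ι ι ℝ) (x y : ι) :
    (P * A * Pᵀ) x y = P x ⬝ᵥ A *ᵥ (P y) := by
  simp only [mul_apply, transpose_apply, dotProduct, mulVec, Finset.sum_mul, Finset.mul_sum]
  rw [Finset.sum_comm]
  exact Finset.sum_congr rfl fun k _ => Finset.sum_congr rfl fun l _ => by ring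


lemma embedJ_zero (n : ℕ) : embedJ n 0 = 0 := by
  ext i j
  simp only [embedJ, of_apply, Matrix.zero_apply]
  rw [dif_neg]
  rintro ⟨h, -⟩
  omega

lemma embed_step (m k : ℕ) (x y : Fin 2 ⊕ Fin m) :
    fromBlocks Jmat 0 0 (embedJ m k) x y
      = embedJ (2 + m) (k + 1) (finSumFinEquiv x) (finSumFinEquiv y) := by
  rcases x with t | p <;> rcases y with s | q <;>
    simp only [fromBlocks_apply₁₁, fromBlocks_apply₁₂, fromBlocks_apply₂₁, fromBlocks_apply₂₂,
      finSumFinEquiv_apply_left, finSumFinEquiv_apply_right, embedJ, diagJ, of_apply,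
      Fin.coe_castAdd, Fin.coe_natAdd, Matrix.zero_apply]
  · rw [dif_pos ⟨by omega, by omega⟩, if_pos (by omega : (t : ℕ) / 2 = (s : ℕ) / 2)]
    exact congrArg₂ Jmat (Fin.ext (by simp only [Fin.val_mk]; omega)) (Fin.ext (by simp only [Fin.val_mk]; omega))
  · by_cases h : (t : ℕ) < 2 * (k + 1) ∧ 2 + (q : ℕ) < 2 * (k + 1)
    · rw [dif_pos h, if_neg (by omega)]
    · rw [dif_neg h]
  · by_cases h : 2 + (p : ℕ) < 2 * (k + 1) ∧ (s : ℕ) < 2 * (k + 1)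
    · rw [dif_pos h, if_neg (by omega)]
    · rw [dif_neg h]
  · by_cases h : (p : ℕ) < 2 * k ∧ (q : ℕ) < 2 * k
    · rw [dif_pos h, dif_pos (⟨by omega, by omega⟩ : 2 + (p:ℕ) < 2*(k+1) ∧ 2 + (q:ℕ) < 2*(k+1))]
      by_cases h2 : (p : ℕ) / 2 = (q : ℕ) / 2
      · rw [if_pos h2, if_pos (by omega : (2 + (p:ℕ)) / 2 = (2 + (q:ℕ)) / 2)]
        exact congrArg₂ Jmat (Fin.ext (by simp only [Fin.val_mk]; omega)) (Fin.ext (by simp only [Fin.val_mk]; omega))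
      · rw [if_neg h2, if_neg (by omega : ¬ (2 + (p:ℕ)) / 2 = (2 + (q:ℕ)) / 2)]
    · rw [dif_neg h, dif_neg (by omega : ¬ (2 + (p:ℕ) < 2*(k+1) ∧ 2 + (q:ℕ) < 2*(k+1)))]



lemma reduction_step (m : ℕ) (A : Matrix (Fin 2 ⊕ Fin m) (Fin 2 ⊕ Fin m) ℝ) (hA : Aᵀ = -A)
    (i j : Fin 2 ⊕ Fin m) (hij : i ≠ j) (h0 : A i j ≠ 0) :
    ∃ P1 : Matrix (Fin 2 ⊕ Fin m) (Fin 2 ⊕ Fin m) ℝ, IsUnit P1 ∧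
      ∃ A₂ : Matrix (Fin m) (Fin m) ℝ, A₂ᵀ = -A₂ ∧
        P1 * A * P1ᵀ = fromBlocks Jmat 0 0 A₂ := by
  classical
  have hskew : ∀ a b, A b a = -A a b := fun a b => by
    have := congrFun (congrFun hA a) b
    simpa [transpose_apply] using this
  have hdiag : ∀ a, A a a = 0 := fun a => by have := hskew a a; linarith
  set c : ℝ := (A i j)⁻¹ with hc
  have hc1 : c * A i j = 1 := inv_mul_cancel₀ h0
  set π := Equiv.swap (Sum.inl 0 : Fin 2 ⊕ Fin m) i with hπ
  have hπi : π i = Sum.inl 0 := Equiv.swap_apply_right _ _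
  have hj'0 : π j ≠ Sum.inl 0 := fun h => hij (π.injective (h.trans hπi.symm)).symm
  set σ := (Equiv.swap (Sum.inl 1 : Fin 2 ⊕ Fin m) (π j)).trans π with hσdef
  have hσ0 : σ (Sum.inl 0) = i := by
    have h1 : Equiv.swap (Sum.inl 1 : Fin 2 ⊕ Fin m) (π j) (Sum.inl 0) = Sum.inl 0 :=
      Equiv.swap_apply_of_ne_of_ne (by simp) (Ne.symm hj'0)
    simp only [hσdef, Equiv.trans_apply, h1]
    exact Equiv.swap_apply_left _ _
  have hσ1 : σ (Sum.inl 1) = j := by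
    simp only [hσdef, Equiv.trans_apply, Equiv.swap_apply_left]
    exact Equiv.swap_apply_self _ _ _
  set u : (Fin 2 ⊕ Fin m) → ℝ := c • (Pi.single i 1 : (Fin 2 ⊕ Fin m) → ℝ) with hu
  set w : (Fin 2 ⊕ Fin m) → ℝ := (Pi.single j 1 : (Fin 2 ⊕ Fin m) → ℝ) with hw
  set v : Fin m → (Fin 2 ⊕ Fin m) → ℝ := fun p =>
    (Pi.single (σ (Sum.inr p)) 1 : (Fin 2 ⊕ Fin m) → ℝ)
      - (c * A (σ (Sum.inr p)) j) • (Pi.single i 1 : (Fin 2 ⊕ Fin m) → ℝ)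
      + (c * A (σ (Sum.inr p)) i) • (Pi.single j 1 : (Fin 2 ⊕ Fin m) → ℝ) with hv
  set P1 : Matrix (Fin 2 ⊕ Fin m) (Fin 2 ⊕ Fin m) ℝ :=
    Matrix.of (Sum.elim (fun t : Fin 2 => if t = 0 then u else w) v) with hP1
  have hrow0 : P1 (Sum.inl 0) = u := rfl
  have hrow1 : P1 (Sum.inl 1) = w := rfl
  have hrowr : ∀ p, P1 (Sum.inr p) = v p := fun p => rfl
  have key : ∀ a b, (Pi.single a 1 : (Fin 2 ⊕ Fin m) → ℝ) ⬝ᵥ A *ᵥ Pi.single b 1 = A a b := by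
    intro a b
    simp [Matrix.mulVec_single, single_dotProduct]
  set M := P1 * A * P1ᵀ with hM
  have hMapp : ∀ x y, M x y = P1 x ⬝ᵥ A *ᵥ (P1 y) := fun x y => congr_apply P1 A x y
  have hMskew : Mᵀ = -M := by
    rw [hM, transpose_mul, transpose_mul, transpose_transpose, hA]
    simp [Matrix.mul_assoc, Matrix.mul_neg, Matrix.neg_mul]
  have h01 : M (Sum.inl 0) (Sum.inl 1) = 1 := by
    rw [hMapp, hrow0, hrow1, hu, hw]
    simp only [Matrix.mulVec_smul, smul_dotProduct, dotProduct_smul, smul_eq_mul, key]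
    exact hc1
  have h00 : M (Sum.inl 0) (Sum.inl 0) = 0 := by
    rw [hMapp, hrow0, hu]
    simp only [Matrix.mulVec_smul, smul_dotProduct, dotProduct_smul, smul_eq_mul, key, hdiag i]
    ring
  have h11 : M (Sum.inl 1) (Sum.inl 1) = 0 := by
    rw [hMapp, hrow1, hw]
    simp only [key, hdiag j]
  have h10 : M (Sum.inl 1) (Sum.inl 0) = -1 := by
    rw [hMapp, hrow1, hrow0, hu, hw]
    simp only [Matrix.mulVec_smul, smul_dotProduct, dotProduct_smul, smul_eq_mul, key,
      hskew i j]
    rw [hc]; field_simp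
  have h0r : ∀ q, M (Sum.inl 0) (Sum.inr q) = 0 := by
    intro q
    rw [hMapp, hrow0, hrowr q, hu]
    simp only [hv]
    generalize σ (Sum.inr q) = k
    simp only [Matrix.mulVec_add, Matrix.mulVec_sub, Matrix.mulVec_smul, add_dotProduct,
      sub_dotProduct, smul_dotProduct, dotProduct_add, dotProduct_sub, dotProduct_smul,
      smul_eq_mul, key, hdiag i, hdiag j, hskew i k, hskew i j]
    rw [hc]; field_simp; ring
  have h1r : ∀ q, M (Sum.inl 1) (Sum.inr q) = 0 := by
    intro q
    rw [hMapp, hrow1, hrowr q, hw]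
    simp only [hv]
    generalize σ (Sum.inr q) = k
    simp only [Matrix.mulVec_add, Matrix.mulVec_sub, Matrix.mulVec_smul, add_dotProduct,
      sub_dotProduct, smul_dotProduct, dotProduct_add, dotProduct_sub, dotProduct_smul,
      smul_eq_mul, key, hdiag i, hdiag j, hskew i j, hskew j k]
    rw [hc]; field_simp; ring
  set A₂ : Matrix (Fin m) (Fin m) ℝ := Matrix.of (fun p q => M (Sum.inr p) (Sum.inr q)) with hA₂
  have hA₂skew : A₂ᵀ = -A₂ := by
    ext p q
    have := congrFun (congrFun hMskew (Sum.inr p)) (Sum.inr q)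
    simpa [hA₂, transpose_apply] using this
  have hr0 : ∀ p, M (Sum.inr p) (Sum.inl 0) = 0 := fun p => by
    have hsw := congrFun (congrFun hMskew (Sum.inl 0)) (Sum.inr p)
    simpa [transpose_apply, h0r p] using hsw
  have hr1 : ∀ p, M (Sum.inr p) (Sum.inl 1) = 0 := fun p => by
    have hsw := congrFun (congrFun hMskew (Sum.inl 1)) (Sum.inr p)
    simpa [transpose_apply, h1r p] using hsw
  have hblocks : M = fromBlocks Jmat 0 0 A₂ := by
    ext x y
    rcases x with t | p <;> rcases y with s | q
    · fin_cases t <;> fin_cases s <;>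
        simp [fromBlocks_apply₁₁, Jmat, h00, h01, h10, h11]
    · fin_cases t <;> simp [fromBlocks_apply₁₂, h0r, h1r]
    · fin_cases s <;> simp [fromBlocks_apply₂₁, hr0, hr1]
    · rfl
  -- invertibility of P1
  have hspan : ∀ a, (Pi.single a 1 : (Fin 2 ⊕ Fin m) → ℝ)
      ∈ Submodule.span ℝ (Set.range P1) := by
    have hi : (Pi.single i 1 : (Fin 2 ⊕ Fin m) → ℝ) ∈ Submodule.span ℝ (Set.range P1) := by
      have hmem : u ∈ Set.range P1 := ⟨Sum.inl 0, hrow0⟩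
      have heq : (Pi.single i 1 : (Fin 2 ⊕ Fin m) → ℝ) = A i j • u := by
        rw [hu, smul_smul, mul_inv_cancel₀ h0, one_smul]
      rw [heq]
      exact Submodule.smul_mem _ _ (Submodule.subset_span hmem)
    have hj : (Pi.single j 1 : (Fin 2 ⊕ Fin m) → ℝ) ∈ Submodule.span ℝ (Set.range P1) :=
      Submodule.subset_span ⟨Sum.inl 1, hrow1⟩
    have hσm : ∀ p : Fin m, (Pi.single (σ (Sum.inr p)) 1 : (Fin 2 ⊕ Fin m) → ℝ)
        ∈ Submodule.span ℝ (Set.range P1) := by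
      intro p
      have hvm : v p ∈ Submodule.span ℝ (Set.range P1) :=
        Submodule.subset_span ⟨Sum.inr p, hrowr p⟩
      have heq : (Pi.single (σ (Sum.inr p)) 1 : (Fin 2 ⊕ Fin m) → ℝ)
          = v p + (c * A (σ (Sum.inr p)) j) • (Pi.single i 1 : (Fin 2 ⊕ Fin m) → ℝ)
            - (c * A (σ (Sum.inr p)) i) • (Pi.single j 1 : (Fin 2 ⊕ Fin m) → ℝ) := by
        simp only [hv]
        ext x
        simp only [Pi.add_apply, Pi.sub_apply, Pi.smul_apply, smul_eq_mul]
        ring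
      rw [heq]
      exact Submodule.sub_mem _ (Submodule.add_mem _ hvm (Submodule.smul_mem _ _ hi))
        (Submodule.smul_mem _ _ hj)
    intro a
    have ha : σ (σ.symm a) = a := σ.apply_symm_apply a
    rcases hcase : σ.symm a with t | p
    · rw [hcase] at ha
      fin_cases t
      · rw [← ha]
        simp only [Fin.zero_eta, hσ0]
        exact hi
      · rw [← ha]
        simp only [Fin.mk_one, hσ1]
        exact hj
    · rw [hcase] at ha
      rw [← ha]
      exact hσm p
  have hP1unit : IsUnit P1 := by
    rw [← Matrix.vecMul_surjective_iff_isUnit]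
    have hrange : LinearMap.range P1.vecMulLinear = ⊤ := by
      rw [range_vecMulLinear, eq_top_iff]
      intro x _
      have hx : x = ∑ a, x a • (Pi.single a 1 : (Fin 2 ⊕ Fin m) → ℝ) := by
        ext b
        simp [Pi.single_apply, Finset.sum_ite_eq, mul_ite]
      rw [hx]
      exact Submodule.sum_mem _ fun a _ => Submodule.smul_mem _ _ (hspan a)
    have hs : Function.Surjective P1.vecMulLinear := LinearMap.range_eq_top.mp hrange
    intro y
    obtain ⟨x, hxy⟩ := hs y
    exact ⟨x, hxy⟩
  exact ⟨P1, hP1unit, A₂, hA₂skew, hblocks⟩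

lemma skew_aux : ∀ n (A : Matrix (Fin n) (Fin n) ℝ), Aᵀ = -A →
    ∃ k, 2 * k ≤ n ∧ ∃ P : Matrix (Fin n) (Fin n) ℝ, IsUnit P ∧ P * A * Pᵀ = embedJ n k := by
  intro n
  induction n using Nat.strong_induction_on with
  | _ n ih =>
    intro A hA
    by_cases hz : A = 0
    · exact ⟨0, by omega, 1, isUnit_one, by simp [hz, embedJ_zero]⟩
    · have hex : ∃ i j, A i j ≠ 0 := by
        by_contra h
        push_neg at h
        exact hz (by ext i j; simpa using h i j)
      obtain ⟨i0, j0, hij0⟩ := hex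
      have hdiag : ∀ a, A a a = 0 := fun a => by
        have := congrFun (congrFun hA a) a
        simp only [transpose_apply, Matrix.neg_apply] at this
        linarith
      have hij : i0 ≠ j0 := fun h => hij0 (h ▸ hdiag i0)
      have hn2 : 2 ≤ n := by
        have h1 := i0.isLt
        have h2 := j0.isLt
        have h3 : i0.val ≠ j0.val := fun h => hij (Fin.ext h)
        omega
      obtain ⟨m, rfl⟩ : ∃ m, n = 2 + m := ⟨n - 2, by omega⟩
      set e : Fin 2 ⊕ Fin m ≃ Fin (2 + m) := finSumFinEquiv with he
      set Ab : Matrix (Fin 2 ⊕ Fin m) (Fin 2 ⊕ Fin m) ℝ := A.submatrix e e with hAb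
      have hAbskew : Abᵀ = -Ab := by
        rw [hAb, transpose_submatrix, hA]
        rfl
      have hne : Ab (e.symm i0) (e.symm j0) ≠ 0 := by
        simpa [hAb, submatrix_apply] using hij0
      have hne' : e.symm i0 ≠ e.symm j0 := fun h => hij (e.symm.injective h)
      obtain ⟨P1, hP1u, A₂, hA₂skew, hP1⟩ :=
        reduction_step m Ab hAbskew (e.symm i0) (e.symm j0) hne' hne
      obtain ⟨k, hk, Q, hQu, hQ⟩ := ih m (by omega) A₂ hA₂skew
      set Q' : Matrix (Fin 2 ⊕ Fin m) (Fin 2 ⊕ Fin m) ℝ := fromBlocks 1 0 0 Q with hQ'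
      have hQ'u : IsUnit Q' := by
        obtain ⟨R, hR1, hR2⟩ := isUnit_iff_exists.mp hQu
        refine isUnit_iff_exists.mpr ⟨fromBlocks 1 0 0 R, ?_, ?_⟩ <;>
          simp [hQ', fromBlocks_multiply, hR1, hR2, ← fromBlocks_one]
      set R' : Matrix (Fin 2 ⊕ Fin m) (Fin 2 ⊕ Fin m) ℝ := Q' * P1 with hR'
      have hR'u : IsUnit R' := hQ'u.mul hP1u
      have hfinal : R' * Ab * R'ᵀ = fromBlocks Jmat 0 0 (embedJ m k) := by
        rw [hR', transpose_mul]
        calc Q' * P1 * Ab * (P1ᵀ * Q'ᵀ) = Q' * (P1 * Ab * P1ᵀ) * Q'ᵀ := by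
              noncomm_ring
          _ = Q' * fromBlocks Jmat 0 0 A₂ * Q'ᵀ := by rw [hP1]
          _ = fromBlocks Jmat 0 0 (embedJ m k) := by
              rw [hQ', fromBlocks_transpose]
              simp [fromBlocks_multiply, Matrix.mul_assoc, hQ]
      refine ⟨k + 1, by omega, R'.submatrix e.symm e.symm,
        hR'u.map (Matrix.reindexAlgEquiv ℝ ℝ e), ?_⟩
      have hAeq : A = Ab.submatrix e.symm e.symm := by
        rw [hAb, submatrix_submatrix]
        simp [Equiv.self_comp_symm]
      rw [hAeq, transpose_submatrix, submatrix_mul_equiv, submatrix_mul_equiv, hfinal]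
      ext x y
      rw [submatrix_apply]
      have := embed_step m k (e.symm x) (e.symm y)
      rwa [Equiv.apply_symm_apply, Equiv.apply_symm_apply] at this

theorem skew_symmetric_standard_form (n : ℕ) (hn : 2 ≤ n)
    (Θ : Matrix (Fin n) (Fin n) ℝ) (hΘ : Θᵀ = -Θ) :
    ∃ (n_q : ℕ) (_ : 2 * n_q ≤ n) (P : Matrix (Fin n) (Fin n) ℝ),
      IsUnit P ∧ P * Θ * Pᵀ = embedJ n n_q := by
  obtain ⟨k, hk, P, hPu, hP⟩ := skew_aux n Θ hΘ
  exact ⟨k, hk, P, hPu, hP⟩
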